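/- If κ and θ are infinite cardinals with κ ≤ 2^θ, then κ ↛_hc (κ)²_θ: there exists a coloring c : [κ]² → θ such that no set A ⊆ κ of size κ is highly connected in a single color, i.e., for every A of size κ and every ξ < θ, the graph (A, c⁻¹(ξ) ∩ [A]²) fails to be highly connected. -/

import Mathlib

/-- Any two points of `X` are connected by an `E`-path inside `X`. -/
def ConnectedIn {α : Type*} (E : α → α → Prop) (X : Set α) : Prop :=
  ∀ a ∈ X, ∀ b ∈ X, Relation.ReflTransGen (fun u v => u ∈ X ∧ v ∈ X ∧ E u v) a b

/-- The graph `(X, E)` is highly connected: removing any set of fewer than `|X|`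
vertices leaves it connected. -/
def HighlyConnected {α : Type*} (E : α → α → Prop) (X : Set α) : Prop :=
  ∀ Y : Set α, Cardinal.mk Y < Cardinal.mk X → ConnectedIn E (X \ Y)

noncomputable def pickDiff {α β : Type u} [Nonempty β] (f : α ↪ Set β) (a b : α) : β :=
  Classical.epsilon (· ∈ symmDiff (f a) (f b))

theorem pickDiff_comm {α β : Type u} [Nonempty β] (f : α ↪ Set β) (a b : α) :
    pickDiff f a b = pickDiff f b a := by
  unfold pickDiff
  rw [symmDiff_comm]

theorem pickDiff_mem {α β : Type u} [Nonempty β] (f : α ↪ Set β) {a b : α} (hab : a ≠ b) :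
    pickDiff f a b ∈ symmDiff (f a) (f b) := by
  have hne : symmDiff (f a) (f b) ≠ ⊥ := fun he => hab (f.injective (symmDiff_eq_bot.mp he))
  have : ∃ x, x ∈ symmDiff (f a) (f b) := by
    rw [← Set.nonempty_def]
    rwa [Set.nonempty_iff_ne_empty]
  exact Classical.epsilon_spec this

open Classical in
noncomputable def col {α β γ : Type u} [Nonempty β] [LinearOrder γ]
    (f : α ↪ Set β) (σ : α ≃ γ) (ι : β × Bool ↪ β) (a b : α) : β :=
  ι (pickDiff f a b, decide (pickDiff f a b ∈ f (if σ a < σ b then a else b)))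

theorem col_comm {α β γ : Type u} [Nonempty β] [LinearOrder γ]
    (f : α ↪ Set β) (σ : α ≃ γ) (ι : β × Bool ↪ β) (a b : α) :
    col f σ ι a b = col f σ ι b a := by
  unfold col
  rcases lt_trichotomy (σ a) (σ b) with hlt | heq | hlt
  · rw [if_pos hlt, if_neg (asymm hlt), pickDiff_comm]
  · rw [σ.injective heq]
  · rw [if_neg (asymm hlt), if_pos hlt, pickDiff_comm]

theorem stmt15 {α β : Type u} [Infinite α] [Infinite β]
    (h : Cardinal.mk α ≤ 2 ^ Cardinal.mk β) :
    ∃ c : α → α → β, (∀ a b, c a b = c b a) ∧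
      ∀ A : Set α, Cardinal.mk A = Cardinal.mk α →
        ∀ ξ : β, ¬ HighlyConnected (fun x y => x ≠ y ∧ c x y = ξ) A := by
  classical
  obtain ⟨f⟩ : Nonempty (α ↪ Set β) := by
    rw [← Cardinal.le_def]; rwa [Cardinal.mk_set]
  obtain ⟨ι⟩ : Nonempty (β × Bool ↪ β) := by
    rw [← Cardinal.le_def]
    have h2 : (2 : Cardinal) ≤ Cardinal.mk β :=
      le_trans (by exact_mod_cast (Cardinal.nat_lt_aleph0 2).le) (Cardinal.aleph0_le_mk β)
    calc Cardinal.mk (β × Bool) = Cardinal.mk β * 2 := by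
          rw [Cardinal.mk_prod]; simp
      _ ≤ Cardinal.mk β * Cardinal.mk β := mul_le_mul_right h2 _
      _ = Cardinal.mk β := Cardinal.mul_eq_self (Cardinal.aleph0_le_mk β)
  have hmk : Cardinal.mk ((Cardinal.mk α).ord).ToType = Cardinal.mk α := by
    rw [Cardinal.mk_toType, Cardinal.card_ord]
  obtain ⟨σ⟩ : Nonempty (α ≃ ((Cardinal.mk α).ord).ToType) := Cardinal.eq.mp hmk.symm
  haveI : IsWellOrder ((Cardinal.mk α).ord).ToType (· < ·) := isWellOrder_lt
  have hIio : ∀ g : ((Cardinal.mk α).ord).ToType,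
      Cardinal.mk {x : α // σ x < g} < Cardinal.mk α := by
    intro g
    have h1 : Cardinal.mk {x : α // σ x < g}
        = Cardinal.mk {y : ((Cardinal.mk α).ord).ToType // y < g} :=
      Cardinal.mk_congr (σ.subtypeEquiv (fun a => Iff.rfl))
    have h2 := Ordinal.card_typein (r := ((· < ·) : ((Cardinal.mk α).ord).ToType → _ → Prop)) g
    rw [h1, ← h2]
    exact Cardinal.lt_ord.mp (Ordinal.typein_lt_self g)
  refine ⟨col f σ ι, col_comm f σ ι, ?_⟩
  intro A hA ξ0 hHC
  have hAinf : Cardinal.aleph0 ≤ Cardinal.mk A := hA ▸ Cardinal.aleph0_le_mk α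
  have hApos : (0 : Cardinal) < Cardinal.mk A := lt_of_lt_of_le Cardinal.aleph0_pos hAinf
  have hboolne : ∀ b e : Bool, b ≠ e → b = !e := by decide
  -- two distinct points of A
  have hAnontriv : Nontrivial A := by
    have : Infinite A := Cardinal.aleph0_le_mk_iff.mp hAinf
    infer_instance
  by_cases hξ : ∃ p : β × Bool, ι p = ξ0
  · obtain ⟨⟨ζ, ε⟩, hp⟩ := hξ
    by_cases hB : ∃ a ∈ A, decide (ζ ∈ f a) = !ε
    · obtain ⟨b₀, hb₀A, hb₀side⟩ := hB
      set Y : Set α := {a | a ∈ A ∧ decide (ζ ∈ f a) = ε ∧ σ a < σ b₀} with hYdef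
      have hYcard : Cardinal.mk Y < Cardinal.mk A := by
        refine lt_of_le_of_lt ?_ (by rw [hA]; exact hIio (σ b₀))
        refine Cardinal.mk_le_of_injective
          (f := fun (y : Y) => (⟨y.1, y.2.2.2⟩ : {x : α // σ x < σ b₀})) ?_
        intro u v huv
        rw [Subtype.mk.injEq] at huv
        exact Subtype.ext huv
      have hconn := hHC Y hYcard
      have hb₀ : b₀ ∈ A \ Y := by
        refine ⟨hb₀A, fun hY => ?_⟩
        rw [hY.2.1] at hb₀side
        simp at hb₀side
      have h2pt : ∃ a ∈ A \ Y, a ≠ b₀ := by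
        by_contra hcon
        push_neg at hcon
        have hsub : A ⊆ Y ∪ {b₀} := by
          intro a haA
          by_cases hY : a ∈ Y
          · exact Or.inl hY
          · exact Or.inr (hcon a ⟨haA, hY⟩)
        have hle : Cardinal.mk A ≤ Cardinal.mk Y + 1 := by
          refine le_trans (Cardinal.mk_le_mk_of_subset hsub) ?_
          refine le_trans (Cardinal.mk_union_le _ _) ?_
          rw [Cardinal.mk_singleton]
        exact absurd hle (not_le.mpr (Cardinal.add_lt_of_lt hAinf hYcard
          (lt_of_lt_of_le Cardinal.one_lt_aleph0 hAinf)))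
      obtain ⟨a₁, ha₁, ha₁ne⟩ := h2pt
      rcases (hconn b₀ hb₀ a₁ ha₁).cases_head with heq | ⟨v, ⟨hb₀', hv, hne, hcol⟩, -⟩
      · exact ha₁ne heq.symm
      · rw [← hp] at hcol
        have hinj := ι.injective hcol
        rw [Prod.mk.injEq] at hinj
        obtain ⟨hδ, hbit⟩ := hinj
        by_cases hlt : σ b₀ < σ v
        · rw [if_pos hlt, hδ] at hbit
          rw [hbit] at hb₀side
          simp at hb₀side
        · rw [if_neg hlt, hδ] at hbit
          have hvlt : σ v < σ b₀ := by
            rcases lt_trichotomy (σ v) (σ b₀) with h' | h' | h'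
            · exact h'
            · exact absurd (σ.injective h').symm hne
            · exact absurd h' hlt
          exact hv.2 ⟨hv.1, hbit, hvlt⟩
    · push_neg at hB
      have hconn := hHC ∅ (by rwa [Cardinal.mk_emptyCollection])
      obtain ⟨x, y, hxy⟩ := hAnontriv
      have hx : x.1 ∈ A \ ∅ := ⟨x.2, Set.notMem_empty _⟩
      have hy : y.1 ∈ A \ ∅ := ⟨y.2, Set.notMem_empty _⟩
      rcases (hconn x.1 hx y.1 hy).cases_head with heq | ⟨v, ⟨hx', hv, hne, hcol⟩, -⟩
      · exact hxy (Subtype.ext heq)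
      · rw [← hp] at hcol
        have hinj := ι.injective hcol
        rw [Prod.mk.injEq] at hinj
        obtain ⟨hδ, hbit⟩ := hinj
        have hmem := pickDiff_mem f hne
        rw [hδ] at hmem
        have hside : decide (ζ ∈ f x.1) ≠ decide (ζ ∈ f v) := by
          rcases Set.mem_symmDiff.mp hmem with ⟨h1, h2⟩ | ⟨h1, h2⟩ <;> simp [h1, h2]
        by_cases hlt : σ x.1 < σ v
        · rw [if_pos hlt, hδ] at hbit
          rw [hbit] at hside
          exact hB v hv.1 (hboolne _ _ hside.symm)
        · rw [if_neg hlt, hδ] at hbit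
          rw [hbit] at hside
          exact hB x.1 x.2 (hboolne _ _ hside)
  · have hconn := hHC ∅ (by rwa [Cardinal.mk_emptyCollection])
    obtain ⟨x, y, hxy⟩ := hAnontriv
    have hx : x.1 ∈ A \ ∅ := ⟨x.2, Set.notMem_empty _⟩
    have hy : y.1 ∈ A \ ∅ := ⟨y.2, Set.notMem_empty _⟩
    rcases (hconn x.1 hx y.1 hy).cases_head with heq | ⟨v, ⟨hx', hv, hne, hcol⟩, -⟩
    · exact hxy (Subtype.ext heq)
    · exact hξ ⟨_, hcol⟩
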